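/- Let g : R^n -> R^{n x m} be continuous, let t > 0, let (u_m) be a sequence in L^2((0,infinity); R^m) converging weakly to u-bar and bounded in norm, and let (x_m) be a sequence of continuous functions on [0, t] converging uniformly to a continuous function x-bar. Then \int_0^t g(x_m(s)) u_m(s) ds converges to \int_0^t g(x-bar(s)) u-bar(s) ds in R^n as m -> infinity. -/

import Mathlib

open MeasureTheory Set Filter
open scoped ENNReal InnerProductSpace

noncomputable section

/-- if `u_m ⇀ ū` weakly in `L²((0,∞);ℝᵐ)` with `(u_m)` bounded in norm,
and `x_m → x̄` uniformly on `[0,t]` with all `x_m` and `x̄` continuous, then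
`∫₀^t g(x_m(s)) u_m(s) ds → ∫₀^t g(x̄(s)) ū(s) ds`. -/
theorem statement14 (n m : ℕ)
    (g : EuclideanSpace ℝ (Fin n) → (EuclideanSpace ℝ (Fin m) →L[ℝ] EuclideanSpace ℝ (Fin n)))
    (hg : Continuous g)
    (t : ℝ) (ht : 0 < t)
    (u : ℕ → ℝ → EuclideanSpace ℝ (Fin m))
    (ubar : ℝ → EuclideanSpace ℝ (Fin m))
    (hu : ∀ k, MemLp (u k) 2 (volume.restrict (Set.Ioi (0:ℝ))))
    (hubar : MemLp ubar 2 (volume.restrict (Set.Ioi (0:ℝ))))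
    -- (u_m) bounded in L²((0,∞);ℝᵐ)
    (hbdd : ∃ C : ℝ≥0∞, ∀ k, eLpNorm (u k) 2 (volume.restrict (Set.Ioi (0:ℝ))) ≤ C)
    -- weak convergence u_m ⇀ ū in L²((0,∞);ℝᵐ)
    (hweak : ∀ v : ℝ → EuclideanSpace ℝ (Fin m),
      MemLp v 2 (volume.restrict (Set.Ioi (0:ℝ))) →
      Tendsto (fun k => ∫ s in Set.Ioi (0:ℝ), ⟪u k s, v s⟫_ℝ) atTop
        (nhds (∫ s in Set.Ioi (0:ℝ), ⟪ubar s, v s⟫_ℝ)))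
    (x : ℕ → ℝ → EuclideanSpace ℝ (Fin n))
    (xbar : ℝ → EuclideanSpace ℝ (Fin n))
    (hx_cont : ∀ k, ContinuousOn (x k) (Set.Icc 0 t))
    (hxbar_cont : ContinuousOn xbar (Set.Icc 0 t))
    (hx_unif : TendstoUniformlyOn x xbar atTop (Set.Icc 0 t)) :
    Tendsto (fun k => ∫ s in (0:ℝ)..t, g (x k s) (u k s)) atTop
      (nhds (∫ s in (0:ℝ)..t, g (xbar s) (ubar s))) := by
  classical
  have hres : (volume.restrict (Set.Ioi (0:ℝ))).restrict (Set.Ioc 0 t)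
      = volume.restrict (Set.Ioc (0:ℝ) t) := by
    rw [Measure.restrict_restrict measurableSet_Ioc,
      Set.inter_eq_left.mpr Set.Ioc_subset_Ioi_self]
  haveI hfin : IsFiniteMeasure (volume.restrict (Set.Ioc (0:ℝ) t)) :=
    ⟨by rw [Measure.restrict_apply_univ]; exact measure_Ioc_lt_top⟩
  have huν : ∀ k, MemLp (u k) 2 (volume.restrict (Set.Ioc (0:ℝ) t)) := fun k =>
    hres ▸ (hu k).restrict _
  have hubarν : MemLp ubar 2 (volume.restrict (Set.Ioc (0:ℝ) t)) := hres ▸ hubar.restrict _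
  -- generic integrability
  have hInt : ∀ (φ : ℝ → (EuclideanSpace ℝ (Fin m) →L[ℝ] EuclideanSpace ℝ (Fin n)))
      (w : ℝ → EuclideanSpace ℝ (Fin m)), ContinuousOn φ (Set.Icc 0 t) →
      MemLp w 2 (volume.restrict (Set.Ioc (0:ℝ) t)) →
      Integrable (fun s => φ s (w s)) (volume.restrict (Set.Ioc (0:ℝ) t)) := by
    intro φ w hφ hw
    obtain ⟨Mφ, hMφ⟩ := isCompact_Icc.exists_bound_of_continuousOn hφ
    have hφm : AEStronglyMeasurable φ (volume.restrict (Set.Ioc (0:ℝ) t)) :=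
      (hφ.mono Set.Ioc_subset_Icc_self).aestronglyMeasurable measurableSet_Ioc
    have hsm : AEStronglyMeasurable (fun s => φ s (w s)) (volume.restrict (Set.Ioc (0:ℝ) t)) :=
      isBoundedBilinearMap_apply.continuous.comp_aestronglyMeasurable (hφm.prodMk hw.1)
    refine ((hw.integrable one_le_two).norm.const_mul Mφ).mono' hsm ?_
    filter_upwards [ae_restrict_mem measurableSet_Ioc] with s hs
    calc ‖φ s (w s)‖ ≤ ‖φ s‖ * ‖w s‖ := (φ s).le_opNorm _
      _ ≤ Mφ * ‖w s‖ :=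
        mul_le_mul_of_nonneg_right (hMφ s (Set.Ioc_subset_Icc_self hs)) (norm_nonneg _)
  have hgxbarC : ContinuousOn (fun s => g (xbar s)) (Set.Icc 0 t) :=
    hg.comp_continuousOn hxbar_cont
  have hgxC : ∀ k, ContinuousOn (fun s => g (x k s)) (Set.Icc 0 t) := fun k =>
    hg.comp_continuousOn (hx_cont k)
  -- uniform bound on ∫ ‖u k‖ via Banach–Steinhaus and Cauchy–Schwarz
  obtain ⟨B, hB0, hB⟩ : ∃ B, 0 ≤ B ∧ ∀ k,
      (∫ s, ‖u k s‖ ∂(volume.restrict (Set.Ioc (0:ℝ) t))) ≤ B := by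
    set T : ℕ → (Lp (EuclideanSpace ℝ (Fin m)) 2 (volume.restrict (Set.Ioi (0:ℝ)))) →L[ℝ] ℝ :=
      fun k => innerSL ℝ ((hu k).toLp (u k)) with hT
    have hpt : ∀ v : Lp (EuclideanSpace ℝ (Fin m)) 2 (volume.restrict (Set.Ioi (0:ℝ))),
        ∃ C, ∀ k, ‖T k v‖ ≤ C := by
      intro v
      have hvm : MemLp (↑v) 2 (volume.restrict (Set.Ioi (0:ℝ))) := Lp.memLp v
      have hTv : ∀ k, T k v = ∫ s in Set.Ioi (0:ℝ), ⟪u k s, (v : ℝ → EuclideanSpace ℝ (Fin m)) s⟫_ℝ := by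
        intro k
        have h0 : T k v = ⟪(hu k).toLp (u k), v⟫_ℝ := rfl
        rw [h0, L2.inner_def]
        refine integral_congr_ae ?_
        filter_upwards [(hu k).coeFn_toLp] with s hs
        rw [hs]
      have htend : Tendsto (fun k => T k v) atTop
          (nhds (∫ s in Set.Ioi (0:ℝ), ⟪ubar s, (v : ℝ → EuclideanSpace ℝ (Fin m)) s⟫_ℝ)) := by
        simp_rw [hTv]; exact hweak _ hvm
      obtain ⟨C, hC⟩ := htend.norm.bddAbove_range
      exact ⟨C, fun k => hC ⟨k, rfl⟩⟩
    obtain ⟨C', hC'⟩ := banach_steinhaus hpt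
    have hTk : ∀ k, (eLpNorm (u k) 2 (volume.restrict (Set.Ioi (0:ℝ)))).toReal ≤ C' := by
      intro k
      have := hC' k
      rwa [hT, innerSL_apply_norm, Lp.norm_toLp] at this
    refine ⟨(max C' 0) * t ^ ((1:ℝ)/2), by positivity, fun k => ?_⟩
    have hCS : eLpNorm (u k) 1 (volume.restrict (Set.Ioc (0:ℝ) t))
        ≤ eLpNorm (u k) 2 (volume.restrict (Set.Ioi (0:ℝ))) * (ENNReal.ofReal t) ^ ((1:ℝ)/2) := by
      calc eLpNorm (u k) 1 (volume.restrict (Set.Ioc (0:ℝ) t))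
          ≤ eLpNorm (u k) 2 (volume.restrict (Set.Ioc (0:ℝ) t))
            * (volume.restrict (Set.Ioc (0:ℝ) t)) Set.univ ^ ((1:ℝ)/(1:ℝ≥0∞).toReal - 1/(2:ℝ≥0∞).toReal) :=
            eLpNorm_le_eLpNorm_mul_rpow_measure_univ one_le_two (huν k).1
        _ = eLpNorm (u k) 2 (volume.restrict (Set.Ioc (0:ℝ) t)) * (ENNReal.ofReal t) ^ ((1:ℝ)/2) := by
            rw [Measure.restrict_apply_univ, Real.volume_Ioc, sub_zero]
            norm_num
        _ ≤ eLpNorm (u k) 2 (volume.restrict (Set.Ioi (0:ℝ))) * (ENNReal.ofReal t) ^ ((1:ℝ)/2) := by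
            gcongr
            exact Set.Ioc_subset_Ioi_self
    calc (∫ s, ‖u k s‖ ∂(volume.restrict (Set.Ioc (0:ℝ) t)))
        = (eLpNorm (u k) 1 (volume.restrict (Set.Ioc (0:ℝ) t))).toReal := by
          rw [eLpNorm_one_eq_lintegral_enorm, integral_norm_eq_lintegral_enorm (huν k).1]
      _ ≤ ((eLpNorm (u k) 2 (volume.restrict (Set.Ioi (0:ℝ)))) * (ENNReal.ofReal t) ^ ((1:ℝ)/2)).toReal := by
          refine ENNReal.toReal_mono (ENNReal.mul_ne_top (hu k).2.ne ?_) hCS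
          exact (ENNReal.rpow_lt_top_of_nonneg (by norm_num) ENNReal.ofReal_ne_top).ne
      _ = (eLpNorm (u k) 2 (volume.restrict (Set.Ioi (0:ℝ)))).toReal * t ^ ((1:ℝ)/2) := by
          rw [ENNReal.toReal_mul, ← ENNReal.toReal_rpow, ENNReal.toReal_ofReal ht.le]
      _ ≤ (max C' 0) * t ^ ((1:ℝ)/2) := by
          have := (hTk k).trans (le_max_left C' 0)
          exact mul_le_mul_of_nonneg_right this (Real.rpow_nonneg ht.le _)
  -- uniform convergence of g ∘ x k
  have hA : ∀ ε > (0:ℝ), ∀ᶠ k in atTop, ∀ s ∈ Set.Icc (0:ℝ) t,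
      ‖g (x k s) - g (xbar s)‖ ≤ ε := by
    intro ε hε
    have hK : IsCompact (xbar '' Set.Icc 0 t) := isCompact_Icc.image_of_continuousOn hxbar_cont
    have hK1 : IsCompact (Metric.cthickening 1 (xbar '' Set.Icc 0 t)) := hK.cthickening
    have hgu := hK1.uniformContinuousOn_of_continuous hg.continuousOn
    rw [Metric.uniformContinuousOn_iff] at hgu
    obtain ⟨δ, hδ, hδ'⟩ := hgu ε hε
    have hev := (Metric.tendstoUniformlyOn_iff.mp hx_unif) (min δ 1) (lt_min hδ one_pos)
    filter_upwards [hev] with k hk s hs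
    have hmem : xbar s ∈ xbar '' Set.Icc 0 t := ⟨s, hs, rfl⟩
    have h1 : xbar s ∈ Metric.cthickening 1 (xbar '' Set.Icc 0 t) :=
      Metric.self_subset_cthickening _ hmem
    have hdist : dist (x k s) (xbar s) < min δ 1 := by rw [dist_comm]; exact hk s hs
    have h2 : x k s ∈ Metric.cthickening 1 (xbar '' Set.Icc 0 t) :=
      Metric.mem_cthickening_of_dist_le _ _ _ _ hmem
        (hdist.le.trans (min_le_right _ _))
    have h3 := hδ' _ h2 _ h1 (hdist.trans_le (min_le_left _ _))
    rw [dist_eq_norm] at h3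
    exact h3.le
  -- term 1 tends to 0
  have h1 : Tendsto (fun k => ∫ s, (g (x k s) - g (xbar s)) (u k s)
      ∂(volume.restrict (Set.Ioc (0:ℝ) t))) atTop (nhds 0) := by
    rw [NormedAddCommGroup.tendsto_nhds_zero]
    intro ε hε
    have hε' : 0 < ε / (B + 1) := by positivity
    filter_upwards [hA (ε / (B + 1)) hε'] with k hk
    have hφC : ContinuousOn (fun s => g (x k s) - g (xbar s)) (Set.Icc 0 t) :=
      (hgxC k).sub hgxbarC
    calc ‖∫ s, (g (x k s) - g (xbar s)) (u k s) ∂(volume.restrict (Set.Ioc (0:ℝ) t))‖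
        ≤ ∫ s, ‖(g (x k s) - g (xbar s)) (u k s)‖ ∂(volume.restrict (Set.Ioc (0:ℝ) t)) :=
          norm_integral_le_integral_norm _
      _ ≤ ∫ s, (ε / (B + 1)) * ‖u k s‖ ∂(volume.restrict (Set.Ioc (0:ℝ) t)) := by
          refine integral_mono_of_nonneg (Eventually.of_forall fun s => norm_nonneg _)
            (((huν k).integrable one_le_two).norm.const_mul _) ?_
          filter_upwards [ae_restrict_mem measurableSet_Ioc] with s hs
          calc ‖(g (x k s) - g (xbar s)) (u k s)‖
              ≤ ‖g (x k s) - g (xbar s)‖ * ‖u k s‖ := (g (x k s) - g (xbar s)).le_opNorm _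
            _ ≤ (ε / (B + 1)) * ‖u k s‖ :=
                mul_le_mul_of_nonneg_right (hk s (Set.Ioc_subset_Icc_self hs)) (norm_nonneg _)
      _ = (ε / (B + 1)) * ∫ s, ‖u k s‖ ∂(volume.restrict (Set.Ioc (0:ℝ) t)) :=
          integral_const_mul _ _
      _ ≤ (ε / (B + 1)) * B := mul_le_mul_of_nonneg_left (hB k) hε'.le
      _ < ε := by
          have h := mul_lt_mul_of_pos_left (lt_add_one B) hε'
          rwa [div_mul_cancel₀ ε (by positivity : B + 1 ≠ 0)] at h
  -- term 2 tends to the limit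
  have h2 : Tendsto (fun k => ∫ s, g (xbar s) (u k s) ∂(volume.restrict (Set.Ioc (0:ℝ) t)))
      atTop (nhds (∫ s, g (xbar s) (ubar s) ∂(volume.restrict (Set.Ioc (0:ℝ) t)))) := by
    set b := EuclideanSpace.basisFun (Fin n) ℝ with hb
    obtain ⟨M, hM⟩ := isCompact_Icc.exists_bound_of_continuousOn hgxbarC
    have hcomp : ∀ i : Fin n,
        Tendsto (fun k => ⟪(b i : EuclideanSpace ℝ (Fin n)),
            ∫ s, g (xbar s) (u k s) ∂(volume.restrict (Set.Ioc (0:ℝ) t))⟫_ℝ) atTop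
          (nhds ⟪(b i : EuclideanSpace ℝ (Fin n)),
            ∫ s, g (xbar s) (ubar s) ∂(volume.restrict (Set.Ioc (0:ℝ) t))⟫_ℝ) := by
      intro i
      set w : ℝ → EuclideanSpace ℝ (Fin m) :=
        fun s => ContinuousLinearMap.adjoint (g (xbar s)) (b i) with hw
      have hwC : ContinuousOn w (Set.Icc 0 t) := by
        have hc : Continuous (fun A : EuclideanSpace ℝ (Fin m) →L[ℝ] EuclideanSpace ℝ (Fin n) =>
            ContinuousLinearMap.adjoint A (b i)) :=
          (ContinuousLinearMap.apply ℝ (EuclideanSpace ℝ (Fin m)) (b i)).continuous.comp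
            (ContinuousLinearMap.adjoint :
              (EuclideanSpace ℝ (Fin m) →L[ℝ] EuclideanSpace ℝ (Fin n)) ≃ₗᵢ[ℝ] _).continuous
        exact hc.comp_continuousOn hgxbarC
      have hv : MemLp ((Set.Ioc (0:ℝ) t).indicator w) 2 (volume.restrict (Set.Ioi (0:ℝ))) := by
        rw [memLp_indicator_iff_restrict measurableSet_Ioc, hres]
        refine MemLp.of_bound
          ((hwC.mono Set.Ioc_subset_Icc_self).aestronglyMeasurable measurableSet_Ioc)
          (M * ‖(b i : EuclideanSpace ℝ (Fin n))‖) ?_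
        filter_upwards [ae_restrict_mem measurableSet_Ioc] with s hs
        calc ‖w s‖ ≤ ‖ContinuousLinearMap.adjoint (g (xbar s))‖ *
              ‖(b i : EuclideanSpace ℝ (Fin n))‖ :=
            (ContinuousLinearMap.adjoint (g (xbar s))).le_opNorm _
          _ = ‖g (xbar s)‖ * ‖(b i : EuclideanSpace ℝ (Fin n))‖ := by
              rw [LinearIsometryEquiv.norm_map]
          _ ≤ M * ‖(b i : EuclideanSpace ℝ (Fin n))‖ :=
              mul_le_mul_of_nonneg_right (hM s (Set.Ioc_subset_Icc_self hs)) (norm_nonneg _)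
      have hEq : ∀ (z : ℝ → EuclideanSpace ℝ (Fin m)),
          MemLp z 2 (volume.restrict (Set.Ioc (0:ℝ) t)) →
          (∫ s in Set.Ioi (0:ℝ), ⟪z s, (Set.Ioc (0:ℝ) t).indicator w s⟫_ℝ)
            = ⟪(b i : EuclideanSpace ℝ (Fin n)),
                ∫ s, g (xbar s) (z s) ∂(volume.restrict (Set.Ioc (0:ℝ) t))⟫_ℝ := by
        intro z hz
        have hzint := hInt _ z hgxbarC hz
        have e1 : ∀ s, ⟪z s, (Set.Ioc (0:ℝ) t).indicator w s⟫_ℝ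
            = (Set.Ioc (0:ℝ) t).indicator
              (fun s => ⟪(b i : EuclideanSpace ℝ (Fin n)), g (xbar s) (z s)⟫_ℝ) s := by
          intro s
          by_cases hs : s ∈ Set.Ioc (0:ℝ) t
          · rw [Set.indicator_of_mem hs, Set.indicator_of_mem hs, hw]
            rw [real_inner_comm, ContinuousLinearMap.adjoint_inner_left]
          · rw [Set.indicator_of_notMem hs, Set.indicator_of_notMem hs, inner_zero_right]
        simp_rw [e1]
        rw [integral_indicator measurableSet_Ioc, hres, integral_inner hzint]
      have h1 := hweak _ hv
      have e2 : ∀ k, (∫ s in Set.Ioi (0:ℝ), ⟪u k s, (Set.Ioc (0:ℝ) t).indicator w s⟫_ℝ)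
          = ⟪(b i : EuclideanSpace ℝ (Fin n)),
              ∫ s, g (xbar s) (u k s) ∂(volume.restrict (Set.Ioc (0:ℝ) t))⟫_ℝ :=
        fun k => hEq (u k) (huν k)
      simp only [e2] at h1
      rwa [hEq ubar hubarν] at h1
    have := tendsto_finset_sum Finset.univ (fun i (_ : i ∈ Finset.univ) => (hcomp i).smul_const (b i))
    simpa only [OrthonormalBasis.sum_repr'] using this
  -- combine
  have hdecomp : ∀ k, (∫ s, g (x k s) (u k s) ∂(volume.restrict (Set.Ioc (0:ℝ) t)))
      = (∫ s, (g (x k s) - g (xbar s)) (u k s) ∂(volume.restrict (Set.Ioc (0:ℝ) t)))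
        + ∫ s, g (xbar s) (u k s) ∂(volume.restrict (Set.Ioc (0:ℝ) t)) := by
    intro k
    rw [← integral_add (hInt (fun s => g (x k s) - g (xbar s)) _ ((hgxC k).sub hgxbarC) (huν k)) (hInt _ _ hgxbarC (huν k))]
    congr 1
    funext s
    simp [ContinuousLinearMap.sub_apply]
  simp_rw [intervalIntegral.integral_of_le ht.le]
  have hfin2 := h1.add h2
  rw [zero_add] at hfin2
  exact Tendsto.congr (fun k => (hdecomp k).symm) hfin2
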